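/- For each fixed y ∈ (0,∞), the function p ↦ tanh_p(y) is strictly concave on (0,∞); in particular, for p > 1 and y > 0, 2·tanh_p(y) > tanh_{p-1}(y) + tanh_{p+1}(y), and hence (tanh_p y)² > tanh_{p-1}(y)·tanh_{p+1}(y). -/

import Mathlib

open Real Set MeasureTheory intervalIntegral Filter Topology

namespace TanhpAux

noncomputable def I (p x : ℝ) : ℝ := ∫ t in (0:ℝ)..x, 1 / (1 - t ^ p)

lemma one_sub_rpow_pos {p t b : ℝ} (hp : 0 < p) (ht : 0 ≤ t) (htb : t ≤ b) (hb : b < 1) :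
    0 < 1 - t ^ p := by
  have h1 : t ^ p ≤ b ^ p := Real.rpow_le_rpow ht htb hp.le
  have h2 : b ^ p < 1 := Real.rpow_lt_one (ht.trans htb) hb hp
  linarith

lemma integrand_contOn {p b : ℝ} (hp : 0 < p) (hb : b < 1) :
    ContinuousOn (fun t : ℝ => 1 / (1 - t ^ p)) (Icc 0 b) := by
  apply ContinuousOn.div continuousOn_const
  · apply ContinuousOn.sub continuousOn_const
    intro t ht
    exact (Real.continuousAt_rpow_const t p (Or.inr hp.le)).continuousWithinAt
  · intro t ht
    exact (one_sub_rpow_pos hp ht.1 ht.2 hb).ne'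

lemma integrand_ge_one {p t b : ℝ} (hp : 0 < p) (ht : 0 ≤ t) (htb : t ≤ b) (hb : b < 1) :
    1 ≤ 1 / (1 - t ^ p) := by
  have h0 := one_sub_rpow_pos hp ht htb hb
  rw [le_div_iff₀ h0]
  have : 0 ≤ t ^ p := Real.rpow_nonneg ht p
  linarith

lemma integrand_le {p t b : ℝ} (hp : 0 < p) (ht : 0 ≤ t) (htb : t ≤ b) (hb : b < 1) :
    1 / (1 - t ^ p) ≤ 1 / (1 - b ^ p) := by
  have h1 : t ^ p ≤ b ^ p := Real.rpow_le_rpow ht htb hp.le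
  have hb0 := one_sub_rpow_pos hp (ht.trans htb) le_rfl hb
  have ht0 := one_sub_rpow_pos hp ht htb hb
  apply one_div_le_one_div_of_le hb0
  linarith

lemma intervalIntegrable_integrand {p x₁ x₂ : ℝ} (hp : 0 < p) (h1 : 0 ≤ x₁) (h12 : x₁ ≤ x₂)
    (h2 : x₂ < 1) : IntervalIntegrable (fun t : ℝ => 1 / (1 - t ^ p)) volume x₁ x₂ := by
  apply ContinuousOn.intervalIntegrable
  apply (integrand_contOn hp h2).mono
  rw [uIcc_of_le h12]
  exact Icc_subset_Icc h1 le_rfl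

lemma I_sub {p x₁ x₂ : ℝ} (hp : 0 < p) (h1 : 0 ≤ x₁) (h12 : x₁ ≤ x₂) (h2 : x₂ < 1) :
    I p x₂ - I p x₁ = ∫ t in x₁..x₂, 1 / (1 - t ^ p) := by
  have ha := intervalIntegrable_integrand hp le_rfl h1 (lt_of_le_of_lt h12 h2)
  have hb := intervalIntegrable_integrand hp h1 h12 h2
  have := intervalIntegral.integral_add_adjacent_intervals ha hb
  unfold I; linarith

lemma I_diff_bounds {p x₁ x₂ : ℝ} (hp : 0 < p) (h1 : 0 ≤ x₁) (h12 : x₁ ≤ x₂) (h2 : x₂ < 1) :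
    x₂ - x₁ ≤ I p x₂ - I p x₁ ∧ I p x₂ - I p x₁ ≤ (x₂ - x₁) / (1 - x₂ ^ p) := by
  rw [I_sub hp h1 h12 h2]
  constructor
  · have := intervalIntegral.integral_mono_on h12
      (_root_.intervalIntegrable_const (c := (1:ℝ)))
      (intervalIntegrable_integrand hp h1 h12 h2)
      (fun t ht => integrand_ge_one hp (h1.trans ht.1) ht.2 h2)
    simpa using this
  · have := intervalIntegral.integral_mono_on h12
      (intervalIntegrable_integrand hp h1 h12 h2)
      (_root_.intervalIntegrable_const (c := 1 / (1 - x₂ ^ p)))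
      (fun t ht => integrand_le hp (h1.trans ht.1) ht.2 h2)
    simpa [div_eq_mul_inv, mul_comm] using this

lemma I_zero (p : ℝ) : I p 0 = 0 := intervalIntegral.integral_same

lemma I_strictMono {p x₁ x₂ : ℝ} (hp : 0 < p) (h1 : 0 ≤ x₁) (h12 : x₁ < x₂) (h2 : x₂ < 1) :
    I p x₁ < I p x₂ := by
  have := (I_diff_bounds hp h1 h12.le h2).1
  linarith

lemma integrand_contOn_Ioo {p : ℝ} (hp : 0 < p) :
    ContinuousOn (fun t : ℝ => 1 / (1 - t ^ p)) (Ioo 0 1) := by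
  apply ContinuousOn.div continuousOn_const
  · apply ContinuousOn.sub continuousOn_const
    intro t ht
    exact (Real.continuousAt_rpow_const t p (Or.inr hp.le)).continuousWithinAt
  · intro t ht
    exact (one_sub_rpow_pos hp ht.1.le le_rfl ht.2).ne'

lemma I_hasDerivAt {p x : ℝ} (hp : 0 < p) (hx0 : 0 < x) (hx1 : x < 1) :
    HasDerivAt (I p) (1 / (1 - x ^ p)) x := by
  apply intervalIntegral.integral_hasDerivAt_right
    (intervalIntegrable_integrand hp le_rfl hx0.le hx1)
  · exact ContinuousOn.stronglyMeasurableAtFilter (s := Ioo (0:ℝ) 1) isOpen_Ioo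
      (integrand_contOn_Ioo hp) _ ⟨hx0, hx1⟩
  · exact (integrand_contOn_Ioo hp).continuousAt (isOpen_Ioo.mem_nhds ⟨hx0, hx1⟩)


lemma one_sub_rpow_le {p t : ℝ} (hp : 0 < p) (ht : 0 ≤ t) (ht1 : t ≤ 1) :
    1 - t ^ p ≤ max 1 p * (1 - t) := by
  rcases le_or_gt p 1 with h | h
  · have h1 : t ^ (1:ℝ) ≤ t ^ p := by
      rcases eq_or_lt_of_le ht with h0 | h0
      · simp [← h0, Real.zero_rpow hp.ne', Real.zero_rpow (one_ne_zero)]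
      · exact Real.rpow_le_rpow_of_exponent_ge h0 ht1 h
    rw [Real.rpow_one] at h1
    have : (1:ℝ) ≤ max 1 p := le_max_left _ _
    nlinarith
  · have hber : 1 + p * (t - 1) ≤ (1 + (t - 1)) ^ p :=
      one_add_mul_self_le_rpow_one_add (by linarith) h.le
    have : (1 : ℝ) + (t - 1) = t := by ring
    rw [this] at hber
    have : max 1 p = p := max_eq_right h.le
    rw [this]
    nlinarith

lemma I_diff_le {p b x₁ x₂ : ℝ} (hp : 0 < p) (h1 : 0 ≤ x₁) (h12 : x₁ ≤ x₂) (h2 : x₂ ≤ b)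
    (hb : b < 1) : I p x₂ - I p x₁ ≤ (x₂ - x₁) / (1 - b ^ p) := by
  have hb2 : x₂ < 1 := h2.trans_lt hb
  rw [I_sub hp h1 h12 hb2]
  have := intervalIntegral.integral_mono_on h12
      (intervalIntegrable_integrand hp h1 h12 hb2)
      (_root_.intervalIntegrable_const (c := 1 / (1 - b ^ p)))
      (fun t ht => integrand_le hp (h1.trans ht.1) (ht.2.trans h2) hb)
  simpa [div_eq_mul_inv, mul_comm] using this

lemma I_continuousOn {p b : ℝ} (hp : 0 < p) (hb0 : 0 ≤ b) (hb : b < 1) :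
    ContinuousOn (I p) (Icc 0 b) := by
  have hden := one_sub_rpow_pos hp hb0 le_rfl hb
  apply LipschitzOnWith.continuousOn (K := Real.toNNReal (1 / (1 - b ^ p)))
  apply LipschitzOnWith.of_dist_le_mul
  intro x hx y hy
  have key : ∀ u v : ℝ, u ∈ Icc (0:ℝ) b → v ∈ Icc (0:ℝ) b → u ≤ v →
      dist (I p u) (I p v) ≤ (1 / (1 - b ^ p)) * dist u v := by
    intro u v hu hv huv
    have h1 := (I_diff_bounds hp hu.1 huv (hv.2.trans_lt hb)).1
    have h2 := I_diff_le hp hu.1 huv hv.2 hb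
    rw [Real.dist_eq, Real.dist_eq, abs_of_nonpos (by linarith), abs_of_nonpos (by linarith)]
    rw [div_eq_mul_inv, mul_comm (v - u)] at h2
    have : (1:ℝ) / (1 - b ^ p) = (1 - b ^ p)⁻¹ := one_div _
    rw [this]; linarith
  rw [Real.coe_toNNReal _ (by positivity)]
  rcases le_total x y with h | h
  · exact key x y hx hy h
  · rw [dist_comm (I p x), dist_comm x]
    exact key y x hy hx h

lemma exists_I_eq {p y : ℝ} (hp : 0 < p) (hy : 0 ≤ y) :
    ∃ x, x ∈ Ico (0:ℝ) 1 ∧ I p x = y := by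
  set C := max 1 p with hC
  have hC0 : 0 < C := lt_of_lt_of_le one_pos (le_max_left _ _)
  set b := 1 - Real.exp (-(C * y)) with hbdef
  have hb1 : b < 1 := by
    have := Real.exp_pos (-(C * y)); simp only [hbdef]; linarith
  have hb0 : 0 ≤ b := by
    have : Real.exp (-(C * y)) ≤ 1 := Real.exp_le_one_iff.mpr (by positivity |> neg_nonpos_of_nonneg)
    simp only [hbdef]; linarith
  -- show y ≤ I p b via comparison with φ x = -log(1-x)/C
  have hIb : y ≤ I p b := by
    set φ : ℝ → ℝ := fun x => -Real.log (1 - x) / C with hφ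
    have hφb : φ b = y := by
      simp only [hφ, hbdef]
      rw [show (1:ℝ) - (1 - Real.exp (-(C * y))) = Real.exp (-(C * y)) by ring,
        Real.log_exp]
      field_simp
    have hmono : MonotoneOn (fun x => I p x - φ x) (Icc 0 b) := by
      apply monotoneOn_of_deriv_nonneg (convex_Icc 0 b)
      · apply ContinuousOn.sub (I_continuousOn hp hb0 hb1)
        apply ContinuousOn.div_const
        apply ContinuousOn.neg
        apply ContinuousOn.log (by fun_prop)
        intro x hx
        have : x < 1 := hx.2.trans_lt hb1
        linarith
      · intro x hx
        rw [interior_Icc] at hx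
        have hx1 : x < 1 := hx.2.trans hb1
        have h1x : (0:ℝ) < 1 - x := by linarith
        have hd1 : HasDerivAt (I p) (1 / (1 - x ^ p)) x := I_hasDerivAt hp hx.1 hx1
        have hd2 : HasDerivAt φ (1 / ((1 - x) * C)) x := by
          have hlog : HasDerivAt (fun x : ℝ => Real.log (1 - x)) (-(1 / (1 - x))) x := by
            have h := (Real.hasDerivAt_log h1x.ne').comp x
              (((hasDerivAt_id x).const_sub 1))
            exact h.congr_deriv (by ring)
          have := (hlog.neg).div_const C
          exact this.congr_deriv (by simp only [one_div, mul_inv]; ring)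
        exact (hd1.sub hd2).differentiableAt.differentiableWithinAt
      · intro x hx
        rw [interior_Icc] at hx
        have hx1 : x < 1 := hx.2.trans hb1
        have h1x : (0:ℝ) < 1 - x := by linarith
        have hd1 : HasDerivAt (I p) (1 / (1 - x ^ p)) x := I_hasDerivAt hp hx.1 hx1
        have hd2 : HasDerivAt φ (1 / ((1 - x) * C)) x := by
          have hlog : HasDerivAt (fun x : ℝ => Real.log (1 - x)) (-(1 / (1 - x))) x := by
            have h := (Real.hasDerivAt_log h1x.ne').comp x
              (((hasDerivAt_id x).const_sub 1))
            exact h.congr_deriv (by ring)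
          have := (hlog.neg).div_const C
          exact this.congr_deriv (by simp only [one_div, mul_inv]; ring)
        rw [show deriv (fun x => I p x - φ x) x = _ from (hd1.sub hd2).deriv]
        have hnum := one_sub_rpow_le hp hx.1.le hx1.le
        have hxp := one_sub_rpow_pos hp hx.1.le le_rfl hx1
        have hCx : (0:ℝ) < (1 - x) * C := by positivity
        have h2 : 1 / ((1 - x) * C) ≤ 1 / (1 - x ^ p) := by
          apply one_div_le_one_div_of_le hxp
          calc 1 - x ^ p ≤ C * (1 - x) := hnum
            _ = (1 - x) * C := by ring
        linarith
    have h0 : (0:ℝ) ∈ Icc (0:ℝ) b := ⟨le_rfl, hb0⟩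
    have hbmem : b ∈ Icc (0:ℝ) b := ⟨hb0, le_rfl⟩
    have := hmono h0 hbmem hb0
    have hφ0 : φ 0 = 0 := by simp [hφ]
    have hI0 : I p 0 = 0 := I_zero p
    simp only [hI0, hφ0, sub_zero, hφb] at this
    linarith [this]
  obtain ⟨x, hx, hIx⟩ := intermediate_value_Icc hb0 (I_continuousOn hp hb0 hb1)
    (⟨by rw [I_zero]; exact hy, hIb⟩ : y ∈ Icc (I p 0) (I p b))
  exact ⟨x, ⟨hx.1, hx.2.trans_lt hb1⟩, hIx⟩

/-- Viability: if `f a ≥ 0`, `f` continuous on `[a,b]`, and at every point of `(a,b]`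
where `f ≤ 0` the function has positive derivative, then `f b > 0`. -/
lemma viability {f : ℝ → ℝ} {a b : ℝ} (hab : a < b) (hc : ContinuousOn f (Icc a b))
    (ha : 0 ≤ f a)
    (hd : ∀ τ ∈ Ioc a b, f τ ≤ 0 → ∃ d, HasDerivAt f d τ ∧ 0 < d) :
    0 < f b := by
  -- step 0: a left-slope lemma
  have slope_le : ∀ τ ∈ Ioc a b, (∀ σ ∈ Ico a τ, f τ ≤ f σ) → ∀ d, HasDerivAt f d τ → d ≤ 0 := by
    intro τ hτ hmin d hder
    by_contra hdpos
    push_neg at hdpos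
    have htend : Tendsto (slope f τ) (𝓝[<] τ) (𝓝 d) :=
      (hasDerivAt_iff_tendsto_slope.mp hder).mono_left
        (nhdsWithin_mono τ (fun y hy => ne_of_lt hy))
    have hev : ∀ᶠ σ in 𝓝[<] τ, 0 < slope f τ σ :=
      htend.eventually (eventually_gt_nhds hdpos)
    have hev2 : ∀ᶠ σ in 𝓝[<] τ, σ ∈ Ioo a τ := Ioo_mem_nhdsLT_of_mem ⟨hτ.1, le_rfl⟩
    obtain ⟨σ, h1, h2⟩ := (hev.and hev2).exists
    have hfσ : f τ ≤ f σ := hmin σ ⟨h2.1.le, h2.2⟩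
    have : slope f τ σ ≤ 0 := by
      rw [slope_def_field]
      apply div_nonpos_of_nonneg_of_nonpos (by linarith)
      linarith [h2.2]
    linarith
  -- step 1: f ≥ 0 on [a,b]
  have hnonneg : ∀ τ ∈ Icc a b, 0 ≤ f τ := by
    by_contra hcon
    push_neg at hcon
    obtain ⟨τ₀, hτ₀, hfτ₀⟩ := hcon
    obtain ⟨τm, hτm, hmin⟩ := isCompact_Icc.exists_isMinOn (nonempty_Icc.mpr hab.le) hc
    have hfm : f τm < 0 := lt_of_le_of_lt (hmin hτ₀) hfτ₀
    have hτma : a < τm := by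
      rcases eq_or_lt_of_le hτm.1 with h | h
      · exact absurd (h ▸ ha) (not_le.mpr (h ▸ hfm))
      · exact h
    obtain ⟨d, hder, hdpos⟩ := hd τm ⟨hτma, hτm.2⟩ hfm.le
    rcases eq_or_lt_of_le hτm.2 with hmb | hmb
    · -- τm = b : left-slope argument
      have : d ≤ 0 := slope_le τm ⟨hτma, hτm.2⟩
        (fun σ hσ => hmin ⟨hσ.1, hσ.2.le.trans hτm.2⟩) d hder
      linarith
    · -- interior: local min, derivative zero
      have hloc : IsLocalMin f τm :=
        hmin.isLocalMin (Icc_mem_nhds hτma hmb)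
      have := hloc.hasDerivAt_eq_zero hder
      linarith
  -- step 2: f b > 0
  rcases lt_or_ge 0 (f b) with h | h
  · exact h
  obtain ⟨d, hder, hdpos⟩ := hd b ⟨hab, le_rfl⟩ h
  have hfb : f b = 0 := le_antisymm h (hnonneg b ⟨hab.le, le_rfl⟩)
  have : d ≤ 0 := slope_le b ⟨hab, le_rfl⟩
    (fun σ hσ => hfb ▸ (hnonneg σ ⟨hσ.1, hσ.2.le⟩)) d hder
  linarith

/-- `u` is the inverse function `τ ↦ tanh_p τ` on `[0, ∞)`. -/
def Sol (p : ℝ) (u : ℝ → ℝ) : Prop :=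
  ∀ τ, 0 ≤ τ → u τ ∈ Ico (0:ℝ) 1 ∧ I p (u τ) = τ

namespace Sol

variable {p : ℝ} {u : ℝ → ℝ}

lemma nonneg (hu : Sol p u) {τ : ℝ} (hτ : 0 ≤ τ) : 0 ≤ u τ := (hu τ hτ).1.1

lemma lt_one (hu : Sol p u) {τ : ℝ} (hτ : 0 ≤ τ) : u τ < 1 := (hu τ hτ).1.2

lemma le_tau (hp : 0 < p) (hu : Sol p u) {τ : ℝ} (hτ : 0 ≤ τ) : u τ ≤ τ := by
  have h := (I_diff_bounds hp le_rfl (hu.nonneg hτ) (hu.lt_one hτ)).1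
  rw [I_zero, (hu τ hτ).2] at h
  linarith

lemma pos (hu : Sol p u) {τ : ℝ} (hτ : 0 < τ) : 0 < u τ := by
  rcases eq_or_lt_of_le (hu.nonneg hτ.le) with h | h
  · exfalso
    have := (hu τ hτ.le).2
    rw [← h, I_zero] at this
    linarith
  · exact h

lemma tau_lower (hp : 0 < p) (hu : Sol p u) {τ : ℝ} (hτ : 0 ≤ τ) : τ * (1 - u τ ^ p) ≤ u τ := by
  have h := (I_diff_bounds hp le_rfl (hu.nonneg hτ) (hu.lt_one hτ)).2
  rw [I_zero, (hu τ hτ).2] at h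
  have hden := one_sub_rpow_pos hp (hu.nonneg hτ) le_rfl (hu.lt_one hτ)
  rw [sub_zero, sub_zero, le_div_iff₀ hden] at h
  linarith

lemma zero (hp : 0 < p) (hu : Sol p u) : u 0 = 0 :=
  le_antisymm (hu.le_tau hp le_rfl) (hu.nonneg le_rfl)

lemma strictMono (hp : 0 < p) (hu : Sol p u) {τ₁ τ₂ : ℝ} (h1 : 0 ≤ τ₁) (h12 : τ₁ < τ₂) : u τ₁ < u τ₂ := by
  by_contra hcon
  push_neg at hcon
  have h2 : 0 ≤ τ₂ := h1.trans h12.le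
  have := (I_diff_bounds hp (hu.nonneg h2) hcon (hu.lt_one h1)).1
  rw [(hu τ₁ h1).2, (hu τ₂ h2).2] at this
  linarith [hu.nonneg h2, hu.nonneg h1]

lemma mono (hp : 0 < p) (hu : Sol p u) {τ₁ τ₂ : ℝ} (h1 : 0 ≤ τ₁) (h12 : τ₁ ≤ τ₂) : u τ₁ ≤ u τ₂ := by
  rcases eq_or_lt_of_le h12 with h | h
  · rw [h]
  · exact (hu.strictMono hp h1 h).le

lemma lip (hp : 0 < p) (hu : Sol p u) {τ₁ τ₂ : ℝ} (h1 : 0 ≤ τ₁) (h12 : τ₁ ≤ τ₂) : u τ₂ - u τ₁ ≤ τ₂ - τ₁ := by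
  have hm := hu.mono hp h1 h12
  have h2 : 0 ≤ τ₂ := h1.trans h12
  have := (I_diff_bounds hp (hu.nonneg h1) hm (hu.lt_one h2)).1
  rw [(hu τ₁ h1).2, (hu τ₂ h2).2] at this
  linarith

lemma continuousOn (hp : 0 < p) (hu : Sol p u) : ContinuousOn u (Ici 0) := by
  apply LipschitzOnWith.continuousOn (K := 1)
  apply LipschitzOnWith.of_dist_le_mul
  intro x hx y hy
  have hx' : (0:ℝ) ≤ x := hx
  have hy' : (0:ℝ) ≤ y := hy
  rw [NNReal.coe_one, one_mul, Real.dist_eq, Real.dist_eq]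
  rcases le_total x y with h | h
  · have h1 := hu.lip hp hx' h
    have h2 := hu.mono hp hx' h
    rw [abs_of_nonpos (by linarith), abs_of_nonpos (by linarith)]
    linarith
  · have h1 := hu.lip hp hy' h
    have h2 := hu.mono hp hy' h
    rw [abs_of_nonneg (by linarith), abs_of_nonneg (by linarith)]
    linarith

lemma continuousAt (hp : 0 < p) (hu : Sol p u) {τ : ℝ} (hτ : 0 < τ) : ContinuousAt u τ :=
  ((hu.continuousOn hp) τ (le_of_lt hτ)).continuousAt (Ici_mem_nhds hτ)

lemma hasDerivAt (hp : 0 < p) (hu : Sol p u) {τ : ℝ} (hτ : 0 < τ) : HasDerivAt u (1 - u τ ^ p) τ := by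
  have hpos := hu.pos hτ
  have hlt := hu.lt_one hτ.le
  have hden := one_sub_rpow_pos hp (hu.nonneg hτ.le) le_rfl hlt
  have hder : HasDerivAt (I p) (1 / (1 - u τ ^ p)) (u τ) := I_hasDerivAt hp hpos hlt
  have hne : (1 : ℝ) / (1 - u τ ^ p) ≠ 0 := by positivity
  have hfg : ∀ᶠ y in nhds τ, I p (u y) = y := by
    filter_upwards [eventually_gt_nhds hτ] with y hy
    exact (hu y hy.le).2
  have := HasDerivAt.of_local_left_inverse (hu.continuousAt hp hτ) hder hne hfg
  rw [one_div, inv_inv] at this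
  exact this

end Sol

lemma exp_ratio {a b : ℝ} (ha : 0 < a) (hab : a ≤ b) :
    a * (1 - Real.exp (-b)) ≤ b * (1 - Real.exp (-a)) := by
  have hb : 0 < b := ha.trans_le hab
  have hkey := convexOn_exp.2 (mem_univ (-b)) (mem_univ (0:ℝ))
    (by positivity : 0 ≤ a / b) (by rw [sub_nonneg, div_le_one hb]; exact hab : 0 ≤ 1 - a / b)
    (by ring)
  simp only [smul_eq_mul, mul_zero, add_zero, Real.exp_zero, mul_one] at hkey
  have h1 : a / b * -b = -a := by field_simp
  rw [h1] at hkey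
  have := mul_le_mul_of_nonneg_left hkey hb.le
  have hne : b ≠ 0 := hb.ne'
  field_simp at this
  nlinarith [this]

lemma ratio_mono {x p₁ p₂ : ℝ} (hx0 : 0 < x) (hx1 : x < 1) (hp1 : 0 < p₁) (hp12 : p₁ ≤ p₂) :
    p₁ * (1 - x ^ p₂) ≤ p₂ * (1 - x ^ p₁) := by
  have hlx : 0 < -Real.log x := by
    have := Real.log_neg hx0 hx1
    linarith
  have h1 : x ^ p₁ = Real.exp (-(p₁ * -Real.log x)) := by
    rw [Real.rpow_def_of_pos hx0]; ring_nf
  have h2 : x ^ p₂ = Real.exp (-(p₂ * -Real.log x)) := by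
    rw [Real.rpow_def_of_pos hx0]; ring_nf
  have := exp_ratio (by positivity : 0 < p₁ * -Real.log x)
    (by nlinarith : p₁ * -Real.log x ≤ p₂ * -Real.log x)
  rw [← h1, ← h2] at this
  nlinarith [this]

lemma T_pos {p₁ p₂ x v : ℝ} (hp1 : 0 < p₁) (hp12 : p₁ < p₂) (hx0 : 0 < x) (hx1 : x < 1)
    (hv : p₂ / p₁ * x ≤ v) : x * (1 - v ^ p₂) < v * (1 - x ^ p₁) := by
  have hR : 1 < p₂ / p₁ := (one_lt_div hp1).mpr hp12
  have hxv : x < v := by nlinarith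
  have h1 : v ^ p₂ > x ^ p₂ := Real.rpow_lt_rpow hx0.le hxv (hp1.trans hp12)
  have h2 := ratio_mono hx0 hx1 hp1 hp12.le
  have h3 : 0 ≤ 1 - x ^ p₁ := (one_sub_rpow_pos hp1 hx0.le le_rfl hx1).le
  have h4 : p₂ / p₁ * x * (1 - x ^ p₁) ≤ v * (1 - x ^ p₁) :=
    mul_le_mul_of_nonneg_right hv h3
  have h5 : x * (1 - x ^ p₂) ≤ x * (p₂ / p₁ * (1 - x ^ p₁)) := by
    apply mul_le_mul_of_nonneg_left _ hx0.le
    rw [div_mul_eq_mul_div, le_div_iff₀ hp1]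
    nlinarith
  nlinarith

lemma rpow_lt_AM {R l₁ l₂ : ℝ} (hR : 1 < R) (hl1 : 0 < l₁) (hl2 : 0 < l₂) (hl : l₁ + l₂ = 1) :
    R ^ l₁ < l₁ * R + l₂ := by
  have hR0 : (0:ℝ) < R := by linarith
  have hkey := strictConvexOn_exp.2 (mem_univ (Real.log R)) (mem_univ (0:ℝ))
    (by have := Real.log_pos hR; exact this.ne' : Real.log R ≠ 0)
    hl1 hl2 hl
  simp only [smul_eq_mul, mul_zero, add_zero, Real.exp_zero, mul_one, Real.exp_log hR0] at hkey
  rw [Real.rpow_def_of_pos hR0, mul_comm]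
  exact hkey

lemma rpow_vs_linear {p₁ p₂ θ ρ : ℝ} (hp1 : 0 < p₁) (hp12 : p₁ < p₂) (hθ0 : 0 < θ)
    (hθ1 : θ < 1) (hρ1 : 1 < ρ) (hρR : ρ ≤ p₂ / p₁) :
    θ + (1 - θ) * ρ < ρ ^ ((1 - θ) * p₂ / (θ * p₁ + (1 - θ) * p₂)) := by
  have hp2 : 0 < p₂ := hp1.trans hp12
  set m := θ * p₁ + (1 - θ) * p₂ with hm
  have hm0 : 0 < m := by nlinarith
  set l₁ := θ * p₁ / m with hl1def
  set l₂ := (1 - θ) * p₂ / m with hl2def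
  have hl1 : 0 < l₁ := div_pos (mul_pos hθ0 hp1) hm0
  have hl2 : 0 < l₂ := div_pos (mul_pos (by linarith) hp2) hm0
  have hl : l₁ + l₂ = 1 := by
    rw [hl1def, hl2def, ← add_div, ← hm, div_self hm0.ne']
  set R := p₂ / p₁ with hR
  have hR1 : 1 < R := (one_lt_div hp1).mpr hp12
  have hkey : l₁ * R + l₂ = p₂ / m := by
    rw [hl1def, hl2def, hR]
    have hmp : (0:ℝ) < m * p₁ := mul_pos hm0 hp1
    rw [div_mul_div_comm, div_add_div _ _ hmp.ne' hm0.ne',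
      div_eq_div_iff (by positivity) hm0.ne']
    ring
  set h : ℝ → ℝ := fun ρ => ρ ^ l₂ - ((1 - θ) * ρ + θ) with hh
  have hmono : StrictMonoOn h (Icc 1 R) := by
    apply strictMonoOn_of_deriv_pos (convex_Icc 1 R)
    · apply ContinuousOn.sub
      · intro x hx
        exact (Real.continuousAt_rpow_const x l₂ (Or.inl (by linarith [hx.1]))).continuousWithinAt
      · fun_prop
    · intro x hx
      rw [interior_Icc] at hx
      have hx0 : 0 < x := lt_trans one_pos hx.1
      have hd1 : HasDerivAt (fun y : ℝ => y ^ l₂) (l₂ * x ^ (l₂ - 1)) x :=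
        Real.hasDerivAt_rpow_const (Or.inl hx0.ne')
      have hd2 : HasDerivAt (fun y : ℝ => (1 - θ) * y + θ) (1 - θ) x := by
        simpa using ((hasDerivAt_id x).const_mul (1 - θ)).add_const θ
      rw [show deriv h x = _ from (hd1.sub hd2).deriv]
      have hneg : l₂ - 1 = -l₁ := by linarith
      have hpowinv : x ^ (l₂ - 1) = (x ^ l₁)⁻¹ := by
        rw [hneg, Real.rpow_neg hx0.le]
      have h6 : x ^ l₁ ≤ R ^ l₁ := Real.rpow_le_rpow hx0.le hx.2.le hl1.le
      have h7 : R ^ l₁ < p₂ / m := by rw [← hkey]; exact rpow_lt_AM hR1 hl1 hl2 hl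
      have h8 : x ^ l₁ < p₂ / m := lt_of_le_of_lt h6 h7
      have hxl1 : 0 < x ^ l₁ := Real.rpow_pos_of_pos hx0 l₁
      have h9 : m / p₂ < (x ^ l₁)⁻¹ := by
        rw [lt_inv_comm₀ (by positivity) hxl1]
        rwa [inv_div]
      have h10 : l₂ * (m / p₂) = 1 - θ := by
        rw [hl2def]; field_simp
      rw [hpowinv]
      nlinarith
  have hmem1 : (1:ℝ) ∈ Icc (1:ℝ) R := ⟨le_rfl, hR1.le⟩
  have hmemρ : ρ ∈ Icc (1:ℝ) R := ⟨hρ1.le, hρR⟩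
  have := hmono hmem1 hmemρ hρ1
  simp only [hh, Real.one_rpow] at this
  linarith

lemma mono_p {p₁ p₂ : ℝ} {u v : ℝ → ℝ} (hp1 : 0 < p₁) (hp12 : p₁ < p₂)
    (hu : Sol p₁ u) (hv : Sol p₂ v) {τ : ℝ} (hτ : 0 < τ) : u τ < v τ := by
  have hp2 : 0 < p₂ := hp1.trans hp12
  have hres : 0 < v τ - u τ := by
    apply viability (f := fun σ => v σ - u σ) hτ
    · exact ((hv.continuousOn hp2).mono Icc_subset_Ici_self).sub
        ((hu.continuousOn hp1).mono Icc_subset_Ici_self)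
    · rw [hu.zero hp1, hv.zero hp2]; simp
    · intro σ hσ hσle
      have hσ0 : 0 < σ := hσ.1
      have hV0 : 0 < v σ := hv.pos hσ0
      have hV1 : v σ < 1 := hv.lt_one hσ0.le
      have hVU : v σ ≤ u σ := by linarith
      refine ⟨(1 - v σ ^ p₂) - (1 - u σ ^ p₁),
        (hv.hasDerivAt hp2 hσ0).sub (hu.hasDerivAt hp1 hσ0), ?_⟩
      have h1 : v σ ^ p₂ < v σ ^ p₁ := Real.rpow_lt_rpow_of_exponent_gt hV0 hV1 hp12
      have h2 : v σ ^ p₁ ≤ u σ ^ p₁ := Real.rpow_le_rpow hV0.le hVU hp1.le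
      linarith
  linarith

set_option maxHeartbeats 1000000 in
lemma claimA {p₁ p₂ θ : ℝ} {u v : ℝ → ℝ} (hp1 : 0 < p₁) (hp12 : p₁ < p₂)
    (hθ0 : 0 < θ) (hθ1 : θ < 1) (hu : Sol p₁ u) (hv : Sol p₂ v) {τ : ℝ} (hτ : 0 < τ) :
    θ * u τ + (1 - θ) * v τ <
      u τ ^ (θ * p₁ / (θ * p₁ + (1 - θ) * p₂)) *
        v τ ^ ((1 - θ) * p₂ / (θ * p₁ + (1 - θ) * p₂)) := by
  have hp2 : 0 < p₂ := hp1.trans hp12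
  set m := θ * p₁ + (1 - θ) * p₂ with hm
  have hm0 : 0 < m := by nlinarith
  set l₁ := θ * p₁ / m with hl1def
  set l₂ := (1 - θ) * p₂ / m with hl2def
  have hl1 : 0 < l₁ := div_pos (mul_pos hθ0 hp1) hm0
  have hl2 : 0 < l₂ := div_pos (mul_pos (by linarith) hp2) hm0
  have hl : l₁ + l₂ = 1 := by
    rw [hl1def, hl2def, ← add_div, ← hm, div_self hm0.ne']
  set f : ℝ → ℝ := fun σ =>
    l₁ * Real.log (u σ) + l₂ * Real.log (v σ) - Real.log (θ * u σ + (1 - θ) * v σ) with hf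
  -- the sign of f is governed by ρ = v/u
  have sign : ∀ σ, 0 < σ →
      (f σ = l₂ * Real.log (v σ / u σ) - Real.log (θ + (1 - θ) * (v σ / u σ))) := by
    intro σ hσ
    have hU0 : 0 < u σ := hu.pos hσ
    have hV0 : 0 < v σ := hv.pos hσ
    have hc0 : 0 < θ * u σ + (1 - θ) * v σ := by nlinarith
    have e1 : Real.log (v σ / u σ) = Real.log (v σ) - Real.log (u σ) :=
      Real.log_div hV0.ne' hU0.ne'
    have e2 : θ + (1 - θ) * (v σ / u σ) = (θ * u σ + (1 - θ) * v σ) / u σ := by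
      field_simp
    have e3 : Real.log ((θ * u σ + (1 - θ) * v σ) / u σ)
        = Real.log (θ * u σ + (1 - θ) * v σ) - Real.log (u σ) :=
      Real.log_div hc0.ne' hU0.ne'
    rw [hf]
    dsimp only
    rw [e1, e2, e3]
    have : l₁ = 1 - l₂ := by linarith
    rw [this]; ring
  have hpos_iff : ∀ σ, 0 < σ → 1 < v σ / u σ → v σ / u σ ≤ p₂ / p₁ → 0 < f σ := by
    intro σ hσ hρ1 hρR
    have hU0 : 0 < u σ := hu.pos hσ
    have hρpos : 0 < v σ / u σ := lt_trans one_pos hρ1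
    have hkey := rpow_vs_linear hp1 hp12 hθ0 hθ1 hρ1 hρR
    rw [sign σ hσ]
    have hlog := Real.log_lt_log (by nlinarith) hkey
    rw [Real.log_rpow hρpos] at hlog
    rw [← hl2def] at hlog
    linarith
  -- base zone
  set δ := (1 - p₁ / p₂) ^ (p₁⁻¹ : ℝ) with hδdef
  have hfrac : 0 < 1 - p₁ / p₂ := by
    rw [sub_pos, div_lt_one hp2]; exact hp12
  have hδ0 : 0 < δ := Real.rpow_pos_of_pos hfrac _
  have base : ∀ σ, 0 < σ → σ ≤ δ → 0 < f σ := by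
    intro σ hσ hσδ
    have hU0 : 0 < u σ := hu.pos hσ
    have hρ1 : 1 < v σ / u σ := (one_lt_div hU0).mpr (mono_p hp1 hp12 hu hv hσ)
    apply hpos_iff σ hσ hρ1
    -- v σ ≤ σ and u σ ≥ σ * p₁ / p₂
    have hvσ : v σ ≤ σ := hv.le_tau hp2 hσ.le
    have huσ : u σ ≤ σ := hu.le_tau hp1 hσ.le
    have hup : u σ ^ p₁ ≤ 1 - p₁ / p₂ := by
      calc u σ ^ p₁ ≤ δ ^ p₁ :=
            Real.rpow_le_rpow (hu.nonneg hσ.le) (huσ.trans hσδ) hp1.le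
        _ = 1 - p₁ / p₂ := by
            rw [hδdef, ← Real.rpow_mul hfrac.le, inv_mul_cancel₀ hp1.ne', Real.rpow_one]
    have hlow := hu.tau_lower hp1 hσ.le
    have hulow : σ * (p₁ / p₂) ≤ u σ := by nlinarith
    rw [div_le_div_iff₀ hU0 hp1]
    have h1 : σ * (p₁ / p₂) * p₂ = σ * p₁ := by field_simp
    have h2 : σ * (p₁ / p₂) * p₂ ≤ u σ * p₂ := mul_le_mul_of_nonneg_right hulow hp2.le
    have h3 : v σ * p₁ ≤ σ * p₁ := mul_le_mul_of_nonneg_right hvσ hp1.le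
    linarith
  -- translating positivity of f to the goal
  have final : 0 < f τ → θ * u τ + (1 - θ) * v τ < u τ ^ l₁ * v τ ^ l₂ := by
    intro hfτ
    have hU0 : 0 < u τ := hu.pos hτ
    have hV0 : 0 < v τ := hv.pos hτ
    have hc0 : 0 < θ * u τ + (1 - θ) * v τ := by nlinarith
    have e1 : l₁ * Real.log (u τ) = Real.log (u τ ^ l₁) := (Real.log_rpow hU0 _).symm
    have e2 : l₂ * Real.log (v τ) = Real.log (v τ ^ l₂) := (Real.log_rpow hV0 _).symm
    have e3 : Real.log (u τ ^ l₁) + Real.log (v τ ^ l₂) = Real.log (u τ ^ l₁ * v τ ^ l₂) :=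
      (Real.log_mul (by positivity) (by positivity)).symm
    rw [hf] at hfτ
    dsimp only at hfτ
    have hlt : Real.log (θ * u τ + (1 - θ) * v τ) < Real.log (u τ ^ l₁ * v τ ^ l₂) := by
      rw [← e3, ← e1, ← e2]; linarith
    exact (Real.log_lt_log_iff hc0 (by positivity)).mp hlt
  rcases le_or_gt τ δ with hcase | hcase
  · exact final (base τ hτ hcase)
  -- viability on [δ, τ]
  apply final
  apply viability hcase
  · -- continuity of f on [δ, τ]
    have hsub : Icc δ τ ⊆ Ici (0:ℝ) := fun σ hσ => hδ0.le.trans hσ.1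
    have hcu : ContinuousOn u (Icc δ τ) := (hu.continuousOn hp1).mono hsub
    have hcv : ContinuousOn v (Icc δ τ) := (hv.continuousOn hp2).mono hsub
    have hσ0 : ∀ σ ∈ Icc δ τ, 0 < σ := fun σ hσ => hδ0.trans_le hσ.1
    apply ContinuousOn.sub
    · apply ContinuousOn.add
      · exact (hcu.log (fun σ hσ => (hu.pos (hσ0 σ hσ)).ne')).const_smul l₁ |>.congr
          (fun σ hσ => by simp [smul_eq_mul])
      · exact (hcv.log (fun σ hσ => (hv.pos (hσ0 σ hσ)).ne')).const_smul l₂ |>.congr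
          (fun σ hσ => by simp [smul_eq_mul])
    · apply ContinuousOn.log
      · exact ((hcu.const_smul θ).add (hcv.const_smul (1 - θ))).congr
          (fun σ hσ => by simp [smul_eq_mul])
      · intro σ hσ
        have := hu.pos (hσ0 σ hσ)
        have := hv.pos (hσ0 σ hσ)
        nlinarith
  · exact (base δ hδ0 le_rfl).le
  · -- derivative positivity where f ≤ 0
    intro σ hσ hfneg
    have hσ0 : 0 < σ := hδ0.trans hσ.1
    set U := u σ with hUdef
    set V := v σ with hVdef
    have hU0 : 0 < U := hu.pos hσ0
    have hU1 : U < 1 := hu.lt_one hσ0.le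
    have hV0 : 0 < V := hv.pos hσ0
    have hV1 : V < 1 := hv.lt_one hσ0.le
    have hUV : U < V := mono_p hp1 hp12 hu hv hσ0
    have hρ1 : 1 < V / U := (one_lt_div hU0).mpr hUV
    have hc0 : 0 < θ * U + (1 - θ) * V := by nlinarith
    -- from f σ ≤ 0 deduce p₂ * U < p₁ * V
    have hρR : p₂ / p₁ < V / U := by
      by_contra hcon
      push_neg at hcon
      exact absurd (hpos_iff σ hσ0 hρ1 hcon) (not_lt.mpr hfneg)
    have hPU : p₂ * U < p₁ * V := by
      rw [div_lt_div_iff₀ hp1 hU0] at hρR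
      linarith
    -- derivative computation
    set a := U ^ p₁ with hadef
    set b := V ^ p₂ with hbdef
    have ha1 : a < 1 := by
      rw [hadef]; exact Real.rpow_lt_one hU0.le hU1 hp1
    have hb1 : b < 1 := by
      rw [hbdef]; exact Real.rpow_lt_one hV0.le hV1 hp2
    have ha0 : 0 < a := Real.rpow_pos_of_pos hU0 _
    have hb0 : 0 < b := Real.rpow_pos_of_pos hV0 _
    have hdu : HasDerivAt u (1 - a) σ := hu.hasDerivAt hp1 hσ0
    have hdv : HasDerivAt v (1 - b) σ := hv.hasDerivAt hp2 hσ0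
    have hlogu : HasDerivAt (fun σ => Real.log (u σ)) (U⁻¹ * (1 - a)) σ := by
      have := (Real.hasDerivAt_log hU0.ne').comp σ hdu
      exact this
    have hlogv : HasDerivAt (fun σ => Real.log (v σ)) (V⁻¹ * (1 - b)) σ := by
      have := (Real.hasDerivAt_log hV0.ne').comp σ hdv
      exact this
    have hdc : HasDerivAt (fun σ => θ * u σ + (1 - θ) * v σ)
        (θ * (1 - a) + (1 - θ) * (1 - b)) σ := (hdu.const_mul θ).add (hdv.const_mul (1 - θ))
    have hlogc : HasDerivAt (fun σ => Real.log (θ * u σ + (1 - θ) * v σ))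
        ((θ * U + (1 - θ) * V)⁻¹ * (θ * (1 - a) + (1 - θ) * (1 - b))) σ := by
      have := (Real.hasDerivAt_log hc0.ne').comp σ hdc
      exact this
    refine ⟨_, ((hlogu.const_mul l₁).add (hlogv.const_mul l₂)).sub hlogc, ?_⟩
    -- positivity of the derivative
    have hT : U * (1 - b) < V * (1 - a) := by
      apply T_pos hp1 hp12 hU0 hU1
      rw [div_mul_eq_mul_div, div_le_iff₀ hp1]
      nlinarith
    have hident : l₁ * (U⁻¹ * (1 - a)) + l₂ * (V⁻¹ * (1 - b)) -
        (θ * U + (1 - θ) * V)⁻¹ * (θ * (1 - a) + (1 - θ) * (1 - b)) =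
        (θ * (1 - θ) * (p₁ * V - p₂ * U)) * (V * (1 - a) - U * (1 - b)) /
          (m * (U * V * (θ * U + (1 - θ) * V))) := by
      rw [hl1def, hl2def, eq_div_iff (by positivity : (m * (U * V * (θ * U + (1 - θ) * V))) ≠ 0)]
      field_simp [hU0.ne', hV0.ne', hc0.ne', hm0.ne']
      ring
    rw [hident]
    have h1 : 0 < θ * (1 - θ) * (p₁ * V - p₂ * U) := mul_pos (mul_pos hθ0 (by linarith)) (by linarith)
    have h2 : 0 < V * (1 - a) - U * (1 - b) := by linarith
    positivity

lemma concave_key {p₁ p₂ θ : ℝ} {u v w : ℝ → ℝ} (hp1 : 0 < p₁) (hp12 : p₁ < p₂)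
    (hθ0 : 0 < θ) (hθ1 : θ < 1) (hu : Sol p₁ u) (hv : Sol p₂ v)
    (hw : Sol (θ * p₁ + (1 - θ) * p₂) w) {y : ℝ} (hy : 0 < y) :
    θ * u y + (1 - θ) * v y < w y := by
  have hp2 : 0 < p₂ := hp1.trans hp12
  set m := θ * p₁ + (1 - θ) * p₂ with hm
  have hm0 : 0 < m := by nlinarith
  set l₁ := θ * p₁ / m with hl1def
  set l₂ := (1 - θ) * p₂ / m with hl2def
  have hres : 0 < w y - (θ * u y + (1 - θ) * v y) := by
    apply viability (f := fun σ => w σ - (θ * u σ + (1 - θ) * v σ)) hy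
    · apply ContinuousOn.sub ((hw.continuousOn hm0).mono Icc_subset_Ici_self)
      apply ContinuousOn.add
      · exact (((hu.continuousOn hp1).mono Icc_subset_Ici_self).const_smul θ).congr
          (fun σ hσ => by simp [smul_eq_mul])
      · exact (((hv.continuousOn hp2).mono Icc_subset_Ici_self).const_smul (1 - θ)).congr
          (fun σ hσ => by simp [smul_eq_mul])
    · rw [hu.zero hp1, hv.zero hp2, hw.zero hm0]; simp
    · intro σ hσ hfneg
      have hσ0 : 0 < σ := hσ.1
      have hU0 : 0 < u σ := hu.pos hσ0
      have hV0 : 0 < v σ := hv.pos hσ0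
      have hdu : HasDerivAt u (1 - u σ ^ p₁) σ := hu.hasDerivAt hp1 hσ0
      have hdv : HasDerivAt v (1 - v σ ^ p₂) σ := hv.hasDerivAt hp2 hσ0
      have hdw : HasDerivAt w (1 - w σ ^ m) σ := hw.hasDerivAt hm0 hσ0
      refine ⟨_, hdw.sub ((hdu.const_mul θ).add (hdv.const_mul (1 - θ))), ?_⟩
      have hWc : w σ ≤ θ * u σ + (1 - θ) * v σ := by linarith
      have h1 : w σ ^ m ≤ (θ * u σ + (1 - θ) * v σ) ^ m :=
        Real.rpow_le_rpow (hw.nonneg hσ0.le) hWc hm0.le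
      have hA := claimA hp1 hp12 hθ0 hθ1 hu hv hσ0
      rw [← hm, ← hl1def, ← hl2def] at hA
      have hc0 : 0 < θ * u σ + (1 - θ) * v σ := by nlinarith
      have h2 : (θ * u σ + (1 - θ) * v σ) ^ m < (u σ ^ l₁ * v σ ^ l₂) ^ m :=
        Real.rpow_lt_rpow hc0.le hA hm0
      have h3 : (u σ ^ l₁ * v σ ^ l₂) ^ m = (u σ ^ p₁) ^ θ * (v σ ^ p₂) ^ (1 - θ) := by
        rw [Real.mul_rpow (by positivity) (by positivity),
          ← Real.rpow_mul hU0.le, ← Real.rpow_mul hV0.le,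
          hl1def, hl2def, div_mul_cancel₀ _ hm0.ne', div_mul_cancel₀ _ hm0.ne',
          mul_comm θ p₁, mul_comm (1 - θ) p₂,
          Real.rpow_mul hU0.le, Real.rpow_mul hV0.le]
      have h4 : (u σ ^ p₁) ^ θ * (v σ ^ p₂) ^ (1 - θ) ≤
          θ * u σ ^ p₁ + (1 - θ) * v σ ^ p₂ :=
        Real.geom_mean_le_arith_mean2_weighted hθ0.le (by linarith)
          (Real.rpow_nonneg hU0.le _) (Real.rpow_nonneg hV0.le _) (by ring)
      rw [h3] at h2
      linarith
  linarith

end TanhpAux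

open TanhpAux

/-- For fixed `y > 0`, `p ↦ tanh_p y` is strictly concave on `(0,∞)`; in particular
for `p > 1`, `2 tanh_p y > tanh_{p-1} y + tanh_{p+1} y` and hence
`(tanh_p y)² > tanh_{p-1} y · tanh_{p+1} y`. -/
theorem tanhp_concave (tanhp : ℝ → ℝ → ℝ)
    (hinv : ∀ p : ℝ, 0 < p → ∀ x ∈ Set.Ico (0:ℝ) 1,
      tanhp p (∫ t in (0:ℝ)..x, 1 / (1 - t ^ p)) = x)
    (y : ℝ) (hy : 0 < y) :
    StrictConcaveOn ℝ (Set.Ioi (0:ℝ)) (fun p => tanhp p y) ∧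
    ∀ p : ℝ, 1 < p →
      tanhp (p - 1) y + tanhp (p + 1) y < 2 * tanhp p y ∧
      tanhp (p - 1) y * tanhp (p + 1) y < (tanhp p y) ^ 2 := by
  have spec : ∀ p : ℝ, 0 < p → Sol p (tanhp p) := by
    intro p hp τ hτ
    obtain ⟨x, hx, hIx⟩ := exists_I_eq hp hτ
    have h := hinv p hp x hx
    rw [show (∫ t in (0:ℝ)..x, 1 / (1 - t ^ p)) = I p x from rfl, hIx] at h
    rw [h]
    exact ⟨hx, hIx⟩
  have key : ∀ p₁ p₂ θ : ℝ, 0 < p₁ → p₁ < p₂ → 0 < θ → θ < 1 →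
      θ * tanhp p₁ y + (1 - θ) * tanhp p₂ y < tanhp (θ * p₁ + (1 - θ) * p₂) y := by
    intro p₁ p₂ θ hp1 hp12 hθ0 hθ1
    have hm0 : 0 < θ * p₁ + (1 - θ) * p₂ := by nlinarith [hp1.trans hp12]
    exact concave_key hp1 hp12 hθ0 hθ1 (spec p₁ hp1) (spec p₂ (hp1.trans hp12))
      (spec _ hm0) hy
  constructor
  · constructor
    · exact convex_Ioi 0
    · intro p₁ hp₁ p₂ hp₂ hne a b ha hb hab
      simp only [smul_eq_mul]
      have hp₁' : (0:ℝ) < p₁ := hp₁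
      have hp₂' : (0:ℝ) < p₂ := hp₂
      have hb1 : b = 1 - a := by linarith
      rcases hne.lt_or_gt with h | h
      · have := key p₁ p₂ a hp₁' h ha (by linarith)
        rw [← hb1] at this
        exact this
      · have := key p₂ p₁ b hp₂' h hb (by linarith)
        have ha1 : 1 - b = a := by linarith
        rw [ha1] at this
        calc a * tanhp p₁ y + b * tanhp p₂ y
            = b * tanhp p₂ y + a * tanhp p₁ y := by ring
          _ < tanhp (b * p₂ + a * p₁) y := this
          _ = tanhp (a * p₁ + b * p₂) y := by rw [add_comm]
  · intro p hp
    have h1 : (0:ℝ) < p - 1 := by linarith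
    have h2 : p - 1 < p + 1 := by linarith
    have hhalf := key (p - 1) (p + 1) (1/2) h1 h2 (by norm_num) (by norm_num)
    have harg : (1/2 : ℝ) * (p - 1) + (1 - 1/2) * (p + 1) = p := by ring
    rw [harg] at hhalf
    set A := tanhp (p - 1) y with hA
    set B := tanhp (p + 1) y with hB
    set C := tanhp p y with hC
    have hsum : A + B < 2 * C := by linarith
    refine ⟨hsum, ?_⟩
    have hA0 : 0 ≤ A := (spec (p - 1) h1 y hy.le).1.1
    have hB0 : 0 ≤ B := (spec (p + 1) (by linarith) y hy.le).1.1
    have hC0 : 0 < 2 * C - (A + B) := by linarith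
    have hC1 : 0 ≤ 2 * C + (A + B) := by linarith
    nlinarith [sq_nonneg (A - B), mul_nonneg hC0.le hC1]
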